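/- Suppose f ∈ R[x] admits a representation f = Σ_{l=1}^p (σ'_{l,0} + Σ_{j∈J_l} σ'_{l,j} g_j) with each σ'_{l,j} an SOS polynomial in the variables x(I_l), and suppose R ⊆ Z_2^n is a set of sign symmetries of A = supp(f) ∪ ∪_j supp(g_j), i.e., r·α ≡ 0 (mod 2) for all r ∈ R and α ∈ A. Then f admits a representation f = Σ_{l=1}^p (σ_{l,0} + Σ_{j∈J_l} σ_{l,j} g_j) where each σ_{l,j} is SOS in the variables x(I_l) and every exponent α ∈ supp(σ_{l,j}) satisfies r·α ≡ 0 (mod 2) for all r ∈ R. -/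

import Mathlib

open MvPolynomial

noncomputable section SignSym
open scoped Classical

variable {n : ℕ} (R : Set (Fin n → ZMod 2))

def cls (α : Fin n →₀ ℕ) : ↥R → ZMod 2 := fun r => ∑ i, r.1 i * ((α i : ℕ) : ZMod 2)

lemma cls_add (α β : Fin n →₀ ℕ) : cls R (α + β) = cls R α + cls R β := by
  funext r
  simp [cls, Finsupp.add_apply, Nat.cast_add, mul_add, Finset.sum_add_distrib]

def prt (h : MvPolynomial (Fin n) ℝ) (γ : ↥R → ZMod 2) : MvPolynomial (Fin n) ℝ :=
  ∑ α ∈ h.support.filter (fun α => cls R α = γ), monomial α (h.coeff α)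

lemma coeff_prt (h : MvPolynomial (Fin n) ℝ) (γ : ↥R → ZMod 2) (β : Fin n →₀ ℕ) :
    (prt R h γ).coeff β = if cls R β = γ then h.coeff β else 0 := by
  simp only [prt, MvPolynomial.coeff_sum, MvPolynomial.coeff_monomial]
  rw [Finset.sum_ite_eq' (h.support.filter (fun α => cls R α = γ)) β (fun α => h.coeff α)]
  by_cases hs : β ∈ h.support
  · by_cases hc : cls R β = γ <;> simp [hs, hc]
  · have : h.coeff β = 0 := by simpa [MvPolynomial.mem_support_iff] using hs
    simp [this]

lemma support_prt (h : MvPolynomial (Fin n) ℝ) (γ : ↥R → ZMod 2) :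
    ∀ β ∈ (prt R h γ).support, cls R β = γ ∧ β ∈ h.support := by
  intro β hβ
  rw [MvPolynomial.mem_support_iff, coeff_prt] at hβ
  by_cases hc : cls R β = γ
  · refine ⟨hc, ?_⟩
    rw [MvPolynomial.mem_support_iff]
    simpa [hc] using hβ
  · simp [hc] at hβ

lemma prt_decomp (h : MvPolynomial (Fin n) ℝ) :
    h = ∑ γ ∈ h.support.image (cls R), prt R h γ := by
  apply MvPolynomial.ext
  intro β
  rw [MvPolynomial.coeff_sum]
  simp only [coeff_prt]
  rw [Finset.sum_ite_eq (h.support.image (cls R)) (cls R β) (fun _ => h.coeff β)]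
  by_cases hs : β ∈ h.support
  · simp [Finset.mem_image_of_mem _ hs]
  · have : h.coeff β = 0 := by simpa [MvPolynomial.mem_support_iff] using hs
    simp [this]

def Pr (h : MvPolynomial (Fin n) ℝ) : MvPolynomial (Fin n) ℝ := prt R h 0

lemma coeff_Pr (h : MvPolynomial (Fin n) ℝ) (β : Fin n →₀ ℕ) :
    (Pr R h).coeff β = if cls R β = 0 then h.coeff β else 0 := coeff_prt R h 0 β

lemma Pr_eq_self (h : MvPolynomial (Fin n) ℝ) (H : ∀ α ∈ h.support, cls R α = 0) :
    Pr R h = h := by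
  apply MvPolynomial.ext
  intro β
  rw [coeff_Pr]
  by_cases hs : β ∈ h.support
  · simp [H β hs]
  · have : h.coeff β = 0 := by simpa [MvPolynomial.mem_support_iff] using hs
    simp [this]

lemma Pr_eq_zero (h : MvPolynomial (Fin n) ℝ) (H : ∀ α ∈ h.support, cls R α ≠ 0) :
    Pr R h = 0 := by
  apply MvPolynomial.ext
  intro β
  rw [coeff_Pr]
  by_cases hs : β ∈ h.support
  · simp [H β hs]
  · have : h.coeff β = 0 := by simpa [MvPolynomial.mem_support_iff] using hs
    simp [this]

lemma Pr_sum {ι : Type*} (s : Finset ι) (F : ι → MvPolynomial (Fin n) ℝ) :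
    Pr R (∑ x ∈ s, F x) = ∑ x ∈ s, Pr R (F x) := by
  apply MvPolynomial.ext
  intro β
  rw [coeff_Pr, MvPolynomial.coeff_sum, MvPolynomial.coeff_sum]
  simp only [coeff_Pr]
  split_ifs with hc <;> simp

lemma Pr_add (a b : MvPolynomial (Fin n) ℝ) : Pr R (a + b) = Pr R a + Pr R b := by
  apply MvPolynomial.ext
  intro β
  simp only [coeff_Pr, MvPolynomial.coeff_add]
  split_ifs <;> simp

lemma support_Pr (h : MvPolynomial (Fin n) ℝ) : (Pr R h).support ⊆ h.support := by
  intro β hβ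
  rw [MvPolynomial.mem_support_iff, coeff_Pr] at hβ
  rw [MvPolynomial.mem_support_iff]
  intro h0
  simp [h0] at hβ

lemma Pr_mul_right (h g : MvPolynomial (Fin n) ℝ) (Hg : ∀ β ∈ g.support, cls R β = 0) :
    Pr R (h * g) = Pr R h * g := by
  apply MvPolynomial.ext
  intro α
  rw [coeff_Pr, MvPolynomial.coeff_mul, MvPolynomial.coeff_mul]
  simp only [coeff_Pr]
  have key : ∀ x ∈ Finset.HasAntidiagonal.antidiagonal α,
      (if cls R α = 0 then h.coeff x.1 * g.coeff x.2 else 0)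
      = (if cls R x.1 = 0 then h.coeff x.1 else 0) * g.coeff x.2 := by
    intro x hx
    have hxadd : x.1 + x.2 = α := Finset.HasAntidiagonal.mem_antidiagonal.mp hx
    by_cases hg2 : g.coeff x.2 = 0
    · simp [hg2]
    · have h2 : cls R x.2 = 0 := Hg _ (MvPolynomial.mem_support_iff.mpr hg2)
      have : cls R α = cls R x.1 := by
        rw [← hxadd, cls_add, h2, add_zero]
      rw [this]
      split_ifs <;> simp
  rw [← Finset.sum_congr rfl key]
  split_ifs <;> simp

lemma Pr_sq (h : MvPolynomial (Fin n) ℝ) :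
    Pr R (h ^ 2) = ∑ γ ∈ h.support.image (cls R), (prt R h γ) ^ 2 := by
  have hd := prt_decomp R h
  conv_lhs => rw [sq, hd, Finset.sum_mul_sum]
  rw [Pr_sum]
  have step : ∀ γ ∈ h.support.image (cls R),
      Pr R (∑ γ' ∈ h.support.image (cls R), prt R h γ * prt R h γ')
      = prt R h γ ^ 2 := by
    intro γ hγ
    rw [Pr_sum]
    have term : ∀ γ' ∈ h.support.image (cls R),
        Pr R (prt R h γ * prt R h γ') = if γ = γ' then prt R h γ * prt R h γ' else 0 := by
      intro γ' _
      have hsupp : ∀ α ∈ (prt R h γ * prt R h γ').support, cls R α = γ + γ' := by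
        intro α hα
        have := MvPolynomial.support_mul _ _ hα
        rw [Finset.mem_add] at this
        obtain ⟨β, hβ, δ, hδ, rfl⟩ := this
        rw [cls_add, (support_prt R h γ β hβ).1, (support_prt R h γ' δ hδ).1]
      by_cases hc : γ = γ'
      · subst hc
        rw [if_pos rfl]
        apply Pr_eq_self
        intro α hα
        rw [hsupp α hα]
        funext r
        exact CharTwo.add_self_eq_zero (γ r)
      · rw [if_neg hc]
        apply Pr_eq_zero
        intro α hα h0
        rw [hsupp α hα] at h0
        apply hc
        funext r
        have h0r := congrFun h0 r
        revert h0r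
        have : ∀ a b : ZMod 2, a + b = 0 → a = b := by decide
        exact this _ _
    rw [Finset.sum_congr rfl term, Finset.sum_ite_eq (h.support.image (cls R)) γ
      (fun γ' => prt R h γ * prt R h γ'), if_pos hγ, sq]
  exact Finset.sum_congr rfl step

lemma sos_of_finsetSum {ι : Type*} (s : Finset ι) (q : ι → MvPolynomial (Fin n) ℝ)
    (σ : MvPolynomial (Fin n) ℝ) (hσ : σ = ∑ x ∈ s, q x ^ 2) :
    ∃ (k : ℕ) (h : Fin k → MvPolynomial (Fin n) ℝ), σ = ∑ i, h i ^ 2 := by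
  refine ⟨s.card, fun i => q (s.equivFin.symm i), ?_⟩
  rw [hσ, ← Finset.sum_attach s (fun x => q x ^ 2)]
  exact (Equiv.sum_comp s.equivFin.symm (fun x => q x.1 ^ 2)).symm

lemma Pr_sos (σ : MvPolynomial (Fin n) ℝ)
    (hσ : ∃ (k : ℕ) (h : Fin k → MvPolynomial (Fin n) ℝ), σ = ∑ i, h i ^ 2) :
    ∃ (k : ℕ) (h : Fin k → MvPolynomial (Fin n) ℝ), Pr R σ = ∑ i, h i ^ 2 := by
  obtain ⟨k, h, rfl⟩ := hσ
  rw [Pr_sum]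
  have : ∀ i : Fin k, Pr R (h i ^ 2) = ∑ γ ∈ (h i).support.image (cls R), prt R (h i) γ ^ 2 :=
    fun i => Pr_sq R (h i)
  rw [Finset.sum_congr rfl (fun i _ => this i)]
  exact sos_of_finsetSum (Finset.univ.sigma fun i => (h i).support.image (cls R))
    (fun x => prt R (h x.1) x.2) _ (by rw [Finset.sum_sigma])


lemma support_Pr_cls (h : MvPolynomial (Fin n) ℝ) :
    ∀ α ∈ (Pr R h).support, ∀ r ∈ R, ∑ i, r i * ((α i : ℕ) : ZMod 2) = 0 := by
  intro α hα r hr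
  have := (support_prt R h 0 α hα).1
  exact congrFun this ⟨r, hr⟩

end SignSym

theorem sparse_representation_sign_symmetric (n p m : ℕ)
    (f : MvPolynomial (Fin n) ℝ) (g : Fin m → MvPolynomial (Fin n) ℝ)
    (I : Fin p → Set (Fin n)) (J : Fin p → Finset (Fin m))
    (hvar : ∀ l, ∀ j ∈ J l, ∀ α ∈ (g j).support, ∀ i, α i ≠ 0 → i ∈ I l)
    (R : Set (Fin n → ZMod 2))
    (hsymf : ∀ r ∈ R, ∀ α ∈ f.support, ∑ i, r i * ((α i : ℕ) : ZMod 2) = 0)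
    (hsymg : ∀ r ∈ R, ∀ j : Fin m, ∀ α ∈ (g j).support,
      ∑ i, r i * ((α i : ℕ) : ZMod 2) = 0)
    (σ0' : Fin p → MvPolynomial (Fin n) ℝ)
    (σ' : Fin p → Fin m → MvPolynomial (Fin n) ℝ)
    (hrep : f = ∑ l, (σ0' l + ∑ j ∈ J l, σ' l j * g j))
    (hsos0 : ∀ l, (∃ (k : ℕ) (h : Fin k → MvPolynomial (Fin n) ℝ),
        σ0' l = ∑ i, h i ^ 2) ∧ ∀ α ∈ (σ0' l).support, ∀ i, α i ≠ 0 → i ∈ I l)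
    (hsos : ∀ l, ∀ j ∈ J l, (∃ (k : ℕ) (h : Fin k → MvPolynomial (Fin n) ℝ),
        σ' l j = ∑ i, h i ^ 2) ∧ ∀ α ∈ (σ' l j).support, ∀ i, α i ≠ 0 → i ∈ I l) :
    ∃ (σ0 : Fin p → MvPolynomial (Fin n) ℝ)
      (σ : Fin p → Fin m → MvPolynomial (Fin n) ℝ),
      f = ∑ l, (σ0 l + ∑ j ∈ J l, σ l j * g j) ∧
      (∀ l, (∃ (k : ℕ) (h : Fin k → MvPolynomial (Fin n) ℝ), σ0 l = ∑ i, h i ^ 2) ∧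
        (∀ α ∈ (σ0 l).support, ∀ i, α i ≠ 0 → i ∈ I l) ∧
        ∀ α ∈ (σ0 l).support, ∀ r ∈ R, ∑ i, r i * ((α i : ℕ) : ZMod 2) = 0) ∧
      (∀ l, ∀ j ∈ J l, (∃ (k : ℕ) (h : Fin k → MvPolynomial (Fin n) ℝ),
          σ l j = ∑ i, h i ^ 2) ∧
        (∀ α ∈ (σ l j).support, ∀ i, α i ≠ 0 → i ∈ I l) ∧
        ∀ α ∈ (σ l j).support, ∀ r ∈ R, ∑ i, r i * ((α i : ℕ) : ZMod 2) = 0) := by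
  refine ⟨fun l => Pr R (σ0' l), fun l j => Pr R (σ' l j), ?_, ?_, ?_⟩
  · have hf : Pr R f = f := by
      apply Pr_eq_self
      intro α hα
      funext r
      exact hsymf r.1 r.2 α hα
    have hgj : ∀ j : Fin m, ∀ β ∈ (g j).support, cls R β = 0 := by
      intro j β hβ
      funext r
      exact hsymg r.1 r.2 j β hβ
    calc f = Pr R f := hf.symm
    _ = ∑ l, (Pr R (σ0' l) + ∑ j ∈ J l, Pr R (σ' l j) * g j) := by
        rw [hrep, Pr_sum]
        refine Finset.sum_congr rfl fun l _ => ?_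
        rw [Pr_add, Pr_sum]
        refine congrArg _ (Finset.sum_congr rfl fun j _ => ?_)
        exact Pr_mul_right R _ _ (hgj j)
  · intro l
    exact ⟨Pr_sos R _ (hsos0 l).1,
      fun α hα => (hsos0 l).2 α (support_Pr R _ hα),
      support_Pr_cls R _⟩
  · intro l j hj
    exact ⟨Pr_sos R _ ((hsos l j hj)).1,
      fun α hα => (hsos l j hj).2 α (support_Pr R _ hα),
      support_Pr_cls R _⟩
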